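/- For all x,z,a,b ∈ {0,1} there exists a complex number c with |c| = 1 such that Z^{z⊕b} X^{x⊕a} · X^a Z^b · P^x · T† · X^x Z^z = c · T† as 2×2 matrices, where T† is the conjugate transpose of T. (Correctness of decryption after homomorphic evaluation of the T†-gate with updated key x' = x⊕a, z' = z⊕b.) -/

import Mathlib

open Matrix

/-- Pauli X gate. -/
noncomputable def Xg : Matrix (Fin 2) (Fin 2) ℂ := !![0, 1; 1, 0]

/-- Pauli Z gate. -/
noncomputable def Zg : Matrix (Fin 2) (Fin 2) ℂ := !![1, 0; 0, -1]

/-- Phase gate `P = diag(1, i)`. -/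
noncomputable def Pg : Matrix (Fin 2) (Fin 2) ℂ := !![1, 0; 0, Complex.I]

/-- T gate `T = diag(1, e^{iπ/4})`. -/
noncomputable def Tg : Matrix (Fin 2) (Fin 2) ℂ :=
  !![1, 0; 0, Complex.exp (Complex.I * Real.pi / 4)]

lemma habs : ‖Complex.exp (Complex.I * Real.pi / 4)‖ = 1 := by
  rw [Complex.norm_exp]
  norm_num [Complex.div_re, Complex.mul_re]

lemma hw1 : (starRingEnd ℂ) (Complex.exp (Complex.I * Real.pi / 4))
    * Complex.exp (Complex.I * Real.pi / 4) = 1 := by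
  rw [← Complex.exp_conj, ← Complex.exp_add, map_div₀, _root_.map_mul, Complex.conj_I,
    Complex.conj_ofReal, map_ofNat]
  ring_nf
  exact Complex.exp_zero

lemma hw2 : Complex.exp (Complex.I * Real.pi / 4) * Complex.exp (Complex.I * Real.pi / 4)
    = Complex.I := by
  rw [← Complex.exp_add]
  rw [show Complex.I * Real.pi / 4 + Complex.I * Real.pi / 4 = Real.pi/2 * Complex.I by ring]
  simp [Complex.exp_mul_I]

lemma hw3 : Complex.I * (starRingEnd ℂ) (Complex.exp (Complex.I * Real.pi / 4))
    = Complex.exp (Complex.I * Real.pi / 4) := by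
  have h : Complex.I * (starRingEnd ℂ) (Complex.exp (Complex.I * Real.pi / 4))
      = Complex.exp (Complex.I * Real.pi / 4) * Complex.exp (Complex.I * Real.pi / 4)
        * (starRingEnd ℂ) (Complex.exp (Complex.I * Real.pi / 4)) := by rw [hw2]
  rw [h, mul_assoc, mul_comm (Complex.exp _) ((starRingEnd ℂ) _), hw1, mul_one]

lemma hw1' : Complex.exp (Complex.I * Real.pi / 4)
    * (starRingEnd ℂ) (Complex.exp (Complex.I * Real.pi / 4)) = 1 := by
  rw [mul_comm]; exact hw1

lemma hT : Tgᴴ = !![1, 0; 0, (starRingEnd ℂ) (Complex.exp (Complex.I * Real.pi / 4))] := by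
  ext i j
  fin_cases i <;> fin_cases j <;> simp [Tg, Matrix.conjTranspose_apply]

set_option maxHeartbeats 1000000 in
/-- Correctness of decryption after the homomorphic evaluation of the T†-gate
with updated key `x' = x⊕a`, `z' = z⊕b`: for all bits `x, z, a, b`,
`Z^{z⊕b} X^{x⊕a} · X^a Z^b · P^x · T† · X^x Z^z = c · T†` for some phase `c`,
where `T†` is the conjugate transpose of `T` (`+` in `Fin 2` is XOR). -/
theorem Tdag_homomorphic_decrypt (x z a b : Fin 2) :
    ∃ c : ℂ, ‖c‖ = 1 ∧
      Zg ^ ((z + b : Fin 2) : ℕ) * Xg ^ ((x + a : Fin 2) : ℕ)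
          * (Xg ^ (a : ℕ) * Zg ^ (b : ℕ)) * Pg ^ (x : ℕ) * Tgᴴ
          * (Xg ^ (x : ℕ) * Zg ^ (z : ℕ))
        = c • Tgᴴ := by
  refine ⟨(-1 : ℂ) ^ ((x : ℕ) * (b : ℕ)) * Complex.exp (Complex.I * Real.pi / 4) ^ (x : ℕ),
    by simp [map_pow, habs], ?_⟩
  fin_cases x <;> fin_cases z <;> fin_cases a <;> fin_cases b <;>
  · ext i j
    fin_cases i <;> fin_cases j <;>
      simp [Xg, Zg, Pg, hT, Matrix.mul_apply, Fin.sum_univ_two, hw1, hw1', hw2, hw3]
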